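/- Let N be a prime number and t > 0 a real number. Then Σ_{d=1}^{∞} φ(Nd)/(Nd)^{2+t} = ζ(1+t)/ζ(2+t) − ζ^{(N)}(1+t)/ζ^{(N)}(2+t), where φ is Euler's totient function, ζ is the Riemann zeta function, and ζ^{(N)}(s) := ζ(s)(1 − N^{−s}); the series on the left converges absolutely. -/

import Mathlib

noncomputable section

/-- `ζ^{(N)}(s) = ζ(s)(1 − N^{−s})`: the Riemann zeta function with the Euler factor
at `N` omitted. -/
def zetaOmit (N : ℕ) (s : ℂ) : ℂ := riemannZeta s * (1 - (N:ℂ)^(-s))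

open LSeries Complex
open scoped LSeries.notation

lemma LSeries_trivChar_eq (N : ℕ) (hN : N.Prime) (u : ℂ) (hu : 1 < u.re) :
    LSeries ↗(1 : DirichletCharacter ℂ N) u = zetaOmit N u := by
  haveI : NeZero N := ⟨hN.ne_zero⟩
  have h1 : (1 : DirichletCharacter ℂ N) = DirichletCharacter.changeLevel (one_dvd N) 1 :=
    (DirichletCharacter.changeLevel_one (one_dvd N)).symm
  rw [h1, DirichletCharacter.LSeries_changeLevel (one_dvd N) 1 hu, hN.primeFactors,
    Finset.prod_singleton, DirichletCharacter.LSeries_modOne_eq,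
    LSeries_one_eq_riemannZeta hu, MulChar.one_apply (isUnit_of_subsingleton _), one_mul]
  rfl

lemma term_mul_id (f : ℕ → ℂ) (u : ℂ) (n : ℕ) :
    term (fun m => f m * (m:ℂ)) u n = term f (u - 1) n := by
  rcases eq_or_ne n 0 with rfl | hn
  · simp [term_zero]
  · have hc : (n:ℂ) ≠ 0 := Nat.cast_ne_zero.mpr hn
    rw [term_of_ne_zero hn, term_of_ne_zero hn, cpow_sub _ _ hc, cpow_one, div_div_eq_mul_div]

lemma totient_conv : (fun m => (m.totient : ℂ)) ⍟ (1 : ℕ → ℂ) = fun m : ℕ => (m : ℂ) := by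
  ext n
  rcases eq_or_ne n 0 with rfl | hn
  · simp [LSeries.convolution_def]
  · rw [LSeries.convolution_def]
    simp only [Pi.one_apply, mul_one]
    rw [show (∑ p ∈ n.divisorsAntidiagonal, ((p.1.totient : ℂ)))
        = ∑ i ∈ n.divisors, ((i.totient : ℂ)) from
      Nat.sum_divisorsAntidiagonal (fun x _ => ((x.totient : ℂ)))]
    rw [← Nat.cast_sum]
    exact congrArg _ (Nat.sum_totient n)

/-- For `N` prime and `t > 0`,
`Σ_{d ≥ 1} φ(Nd)/(Nd)^{2+t} = ζ(1+t)/ζ(2+t) − ζ^{(N)}(1+t)/ζ^{(N)}(2+t)`,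
the series converging absolutely. -/
theorem totient_dirichlet_series (N : ℕ) (hN : N.Prime) (t : ℝ) (ht : 0 < t) :
    Summable (fun d : ℕ =>
      ‖((Nat.totient (N*(d+1)) : ℂ) / ((((N*(d+1) : ℕ) : ℝ)^(2+t) : ℝ) : ℂ))‖) ∧
    (∑' d : ℕ, ((Nat.totient (N*(d+1)) : ℂ) / ((((N*(d+1) : ℕ) : ℝ)^(2+t) : ℝ) : ℂ)))
      = riemannZeta (((1+t : ℝ) : ℂ)) / riemannZeta (((2+t : ℝ) : ℂ))
        - zetaOmit N (((1+t : ℝ) : ℂ)) / zetaOmit N (((2+t : ℝ) : ℂ)) := by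
  haveI : NeZero N := ⟨hN.ne_zero⟩
  haveI : Fact (1 < N) := ⟨hN.one_lt⟩
  set s : ℂ := ((2+t : ℝ) : ℂ) with hsdef
  set s' : ℂ := ((1+t : ℝ) : ℂ) with hs'def
  have hs : 1 < s.re := by simp only [hsdef, Complex.ofReal_re]; linarith
  have hss : s - 1 = s' := by simp only [hsdef, hs'def]; push_cast; ring
  have hs' : 1 < (s-1).re := by rw [hss]; simp only [hs'def, Complex.ofReal_re]; linarith
  set χ₀ : DirichletCharacter ℂ N := 1 with hχ₀def
  set ftot : ℕ → ℂ := fun m : ℕ => (m.totient : ℂ) with hftot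
  -- summabilities
  have h1s : LSeriesSummable (1 : ℕ → ℂ) s := LSeriesSummable_one_iff.mpr hs
  have hid_term : ∀ n, term (fun m : ℕ => (m:ℂ)) s n = term (1 : ℕ → ℂ) (s-1) n := by
    intro n
    rw [← term_mul_id (1 : ℕ → ℂ) s n]
    simp
  have hid : LSeriesSummable (fun m : ℕ => (m:ℂ)) s := by
    have h1 : LSeriesSummable (1 : ℕ → ℂ) (s-1) := LSeriesSummable_one_iff.mpr hs'
    exact (summable_congr hid_term).mpr h1
  have hφ : LSeriesSummable ftot s := by
    refine Summable.of_norm_bounded (g := fun n => ‖term (fun m : ℕ => (m:ℂ)) s n‖) hid.norm ?_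
    intro n
    rcases eq_or_ne n 0 with rfl | hn
    · simp [term_zero]
    · simp only [term_of_ne_zero hn, norm_div]
      gcongr
      simpa [hftot] using (show (n.totient:ℝ) ≤ n from by exact_mod_cast n.totient_le)
  have hχφ : LSeriesSummable (↗χ₀ * ftot) s := DirichletCharacter.LSeriesSummable_mul χ₀ hφ
  have hχ : LSeriesSummable ↗χ₀ s := DirichletCharacter.LSeriesSummable_of_one_lt_re χ₀ hs
  -- L-series values
  have hshift : ∀ f : ℕ → ℂ, LSeries (fun m : ℕ => f m * (m:ℂ)) s = LSeries f (s-1) :=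
    fun f => tsum_congr (term_mul_id f s)
  have hidval : LSeries (fun m : ℕ => (m:ℂ)) s = riemannZeta s' := by
    rw [show LSeries (fun m : ℕ => (m:ℂ)) s = LSeries (1 : ℕ → ℂ) (s-1) from tsum_congr hid_term,
      LSeries_one_eq_riemannZeta hs', hss]
  have hzs : riemannZeta s ≠ 0 := riemannZeta_ne_zero_of_one_lt_re hs
  have hA : LSeries ftot s = riemannZeta s' / riemannZeta s := by
    rw [eq_div_iff hzs, ← LSeries_one_eq_riemannZeta hs,
      ← LSeries_convolution' hφ h1s, totient_conv, hidval]
  have hLχ : ∀ u : ℂ, 1 < u.re → LSeries ↗χ₀ u = zetaOmit N u :=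
    fun u hu => LSeries_trivChar_eq N hN u hu
  have hzOs : zetaOmit N s ≠ 0 := by
    rw [← hLχ s hs]
    exact DirichletCharacter.LSeries_ne_zero_of_one_lt_re χ₀ hs
  have hB : LSeries (↗χ₀ * ftot) s = zetaOmit N s' / zetaOmit N s := by
    rw [eq_div_iff hzOs, ← hLχ s hs, ← LSeries_convolution' hχφ hχ]
    have hc : (↗χ₀ * ftot) ⍟ ↗χ₀ = ↗χ₀ * fun m : ℕ => (m:ℂ) := by
      have h1 : (↗χ₀ : ℕ → ℂ) = ↗χ₀ * (1 : ℕ → ℂ) := by ext n; simp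
      rw [show ((↗χ₀ * ftot) ⍟ ↗χ₀) = ((↗χ₀ * ftot) ⍟ (↗χ₀ * (1 : ℕ → ℂ))) by rw [← h1],
        DirichletCharacter.mul_convolution_distrib χ₀ ftot (1 : ℕ → ℂ), totient_conv]
    rw [hc, show (↗χ₀ * fun m : ℕ => (m:ℂ)) = fun m : ℕ => ↗χ₀ m * (m:ℂ) from rfl,
      hshift ↗χ₀, hLχ (s-1) hs', hss]
  -- the sum over multiples of N
  set i : ℕ → ℕ := fun d => N*(d+1) with hidef
  have hi : Function.Injective i := by
    intro a b h
    simp only [hidef] at h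
    have := Nat.eq_of_mul_eq_mul_left hN.pos h
    omega
  have hine : ∀ d, i d ≠ 0 := fun d => Nat.mul_ne_zero hN.ne_zero (Nat.succ_ne_zero d)
  have hkey : ∀ d : ℕ, term ftot s (i d)
      = ((Nat.totient (N*(d+1)) : ℂ) / ((((N*(d+1) : ℕ) : ℝ)^(2+t) : ℝ) : ℂ)) := by
    intro d
    rw [term_of_ne_zero (hine d), Complex.ofReal_cpow (by positivity), Complex.ofReal_natCast]
  have hχ0i : ∀ d : ℕ, ↗χ₀ (i d) = 0 := by
    intro d
    show χ₀ ((i d : ℕ) : ZMod N) = 0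
    have h0 : ((i d : ℕ) : ZMod N) = 0 := by
      simp only [hidef]; push_cast [ZMod.natCast_self]; ring
    rw [h0]
    exact χ₀.map_nonunit not_isUnit_zero
  set g : ℕ → ℂ := fun n => term ftot s n - term (↗χ₀ * ftot) s n with hgdef
  have hsupp : Function.support g ⊆ Set.range i := by
    intro n hn
    rcases eq_or_ne n 0 with rfl | hn0
    · simp [hgdef, term_zero] at hn
    by_cases hdvd : N ∣ n
    · obtain ⟨m, rfl⟩ := hdvd
      have hm : m ≠ 0 := by rintro rfl; simp at hn0
      exact ⟨m - 1, by simp only [hidef]; congr 1; omega⟩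
    · exfalso
      apply hn
      have hu : ↗χ₀ n = 1 := by
        have hcop : Nat.Coprime n N := (Nat.Prime.coprime_iff_not_dvd hN).mpr hdvd |>.symm
        have : IsUnit ((n : ℕ) : ZMod N) := (ZMod.isUnit_iff_coprime n N).mpr hcop
        simp only [hχ₀def]
        exact MulChar.one_apply this
      simp only [hgdef, term_of_ne_zero hn0, Pi.mul_apply, hu, one_mul, sub_self]
  have hgi : ∀ d : ℕ, g (i d)
      = ((Nat.totient (N*(d+1)) : ℂ) / ((((N*(d+1) : ℕ) : ℝ)^(2+t) : ℝ) : ℂ)) := by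
    intro d
    have h2 : term (↗χ₀ * ftot) s (i d) = 0 := by
      rw [term_of_ne_zero (hine d)]
      simp [hχ0i d]
    show term ftot s (i d) - term (↗χ₀ * ftot) s (i d) = _
    rw [h2, sub_zero, hkey d]
  constructor
  · have h1 : Summable (fun d => term ftot s (i d)) := hφ.comp_injective hi
    exact (summable_congr fun d => by rw [hkey d]).mp h1.norm
  · calc (∑' d : ℕ, ((Nat.totient (N*(d+1)) : ℂ) / ((((N*(d+1) : ℕ) : ℝ)^(2+t) : ℝ) : ℂ)))
        = ∑' d : ℕ, g (i d) := tsum_congr fun d => (hgi d).symm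
      _ = ∑' n : ℕ, g n := hi.tsum_eq hsupp
      _ = LSeries ftot s - LSeries (↗χ₀ * ftot) s := Summable.tsum_sub hφ hχφ
      _ = _ := by rw [hA, hB]

end
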